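/- Let Q : ℝ³ → M₄(ℂ) be measurable with |Q(x)_{jk}| ≤ C_q ⟨x⟩^{-ρ} for all x and all j,k (with C_q > 0, ρ > 1), and let f : ℝ³ → ℂ⁴ be measurable with |f(x)| ≤ C_f ⟨x⟩^{-2} for all x. Then there is a constant C > 0, depending only on C_f, C_q and ρ, such that for every R₀ ≥ 1, every r ≥ 2R₀ and every ω ∈ ℝ³ with |ω| = 1, | ∫_{|y| ≤ R₀} α·( ω − (ω − r⁻¹y)/|ω − r⁻¹y|³ ) Q(y) f(y) dy | ≤ C R₀ r⁻¹. -/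

import Mathlib

open MeasureTheory Real Filter

noncomputable section

abbrev R3 := EuclideanSpace ℝ (Fin 3)
abbrev C4 := EuclideanSpace ℂ (Fin 4)
abbrev C2 := EuclideanSpace ℂ (Fin 2)

/-- The Pauli matrices. -/
def pauli : Fin 3 → Matrix (Fin 2) (Fin 2) ℂ
  | 0 => !![0, 1; 1, 0]
  | 1 => !![0, -Complex.I; Complex.I, 0]
  | 2 => !![1, 0; 0, -1]

/-- The Dirac matrices `α_j`. -/
def dirac (j : Fin 3) : Matrix (Fin 4) (Fin 4) ℂ :=
  Matrix.reindex finSumFinEquiv finSumFinEquiv (Matrix.fromBlocks 0 (pauli j) (pauli j) 0)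

/-- `σ · x` for `x ∈ ℝ³`. -/
def pauliDot (x : R3) : Matrix (Fin 2) (Fin 2) ℂ :=
  ∑ j, (x j : ℂ) • pauli j

/-- `α · x` for `x ∈ ℝ³`. -/
def alphaDot (x : R3) : Matrix (Fin 4) (Fin 4) ℂ :=
  ∑ j, (x j : ℂ) • dirac j

/-- Action of a 4×4 complex matrix on `ℂ⁴` (with the Euclidean norm). -/
def mulVec4 (M : Matrix (Fin 4) (Fin 4) ℂ) (v : C4) : C4 :=
  (WithLp.equiv 2 (Fin 4 → ℂ)).symm (M.mulVec ((WithLp.equiv 2 (Fin 4 → ℂ)) v))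

/-- Action of a 2×2 complex matrix on `ℂ²` (with the Euclidean norm). -/
def mulVec2 (M : Matrix (Fin 2) (Fin 2) ℂ) (v : C2) : C2 :=
  (WithLp.equiv 2 (Fin 2 → ℂ)).symm (M.mulVec ((WithLp.equiv 2 (Fin 2 → ℂ)) v))

/-- The Japanese bracket `⟨x⟩ = √(1+|x|²)`. -/
def jb (x : R3) : ℝ := Real.sqrt (1 + ‖x‖ ^ 2)

/-- Cross product on `ℝ³`. -/
def cross3 (a b : R3) : R3 :=
  (WithLp.equiv 2 (Fin 3 → ℝ)).symm
    ![a 1 * b 2 - a 2 * b 1, a 2 * b 0 - a 0 * b 2, a 0 * b 1 - a 1 * b 0]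

/- ### Auxiliary lemmas -/

lemma dirac_entry_le (i : Fin 3) (j k : Fin 4) : ‖dirac i j k‖ ≤ 1 := by
  fin_cases i <;> fin_cases j <;> fin_cases k <;>
    simp (config := { decide := true }) [dirac, pauli, Matrix.fromBlocks, finSumFinEquiv,
      Matrix.reindex_apply, Matrix.submatrix_apply, Fin.addCases, Fin.castLT, Fin.subNat,
      Complex.norm_I, show ((3:Fin 4):ℕ) = 3 from rfl, show ((2:Fin 4):ℕ) = 2 from rfl,
      Fin.mk_one]

lemma euclid_coord_le {𝕜 : Type*} [RCLike 𝕜] {n : Type*} [Fintype n]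
    (x : EuclideanSpace 𝕜 n) (i : n) : ‖x i‖ ≤ ‖x‖ := by
  rw [EuclideanSpace.norm_eq]
  calc ‖x i‖ = √(‖x i‖^2) := (Real.sqrt_sq (norm_nonneg _)).symm
    _ ≤ √(∑ j, ‖x j‖^2) := Real.sqrt_le_sqrt
        (Finset.single_le_sum (f := fun j => ‖x j‖^2) (fun j _ => sq_nonneg _) (Finset.mem_univ i))

lemma mulVec4_norm_le (M : Matrix (Fin 4) (Fin 4) ℂ) (v : C4) {a : ℝ}
    (ha : ∀ j k, ‖M j k‖ ≤ a) : ‖mulVec4 M v‖ ≤ 8 * a * ‖v‖ := by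
  have ha0 : 0 ≤ a := le_trans (norm_nonneg _) (ha 0 0)
  have hcomp : ∀ j : Fin 4, ‖mulVec4 M v j‖ ≤ 4 * a * ‖v‖ := by
    intro j
    have : mulVec4 M v j = ∑ k, M j k * v k := rfl
    rw [this]
    calc ‖∑ k, M j k * v k‖ ≤ ∑ k : Fin 4, ‖M j k * v k‖ := norm_sum_le _ _
      _ ≤ ∑ k : Fin 4, a * ‖v‖ := by
          refine Finset.sum_le_sum fun k _ => ?_
          rw [norm_mul]
          exact mul_le_mul (ha j k) (euclid_coord_le v k) (norm_nonneg _) ha0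
      _ = 4 * a * ‖v‖ := by simp [Finset.sum_const]; ring
  rw [EuclideanSpace.norm_eq]
  calc √(∑ j, ‖mulVec4 M v j‖^2) ≤ √(∑ _j : Fin 4, (4*a*‖v‖)^2) := by
        apply Real.sqrt_le_sqrt
        exact Finset.sum_le_sum fun j _ => pow_le_pow_left₀ (norm_nonneg _) (hcomp j) 2
    _ = 8 * a * ‖v‖ := by
        rw [Finset.sum_const]
        simp only [Finset.card_univ, Fintype.card_fin, nsmul_eq_mul]
        rw [Nat.cast_ofNat, show (4:ℝ) * (4*a*‖v‖)^2 = (8*a*‖v‖)^2 by ring]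
        exact Real.sqrt_sq (by positivity)

lemma alphaDot_entry_le (v : R3) (j k : Fin 4) : ‖alphaDot v j k‖ ≤ 3 * ‖v‖ := by
  have h : alphaDot v j k = ∑ i : Fin 3, (v i : ℂ) * dirac i j k := by
    simp [alphaDot, Matrix.sum_apply]
  rw [h]
  calc ‖∑ i : Fin 3, (v i : ℂ) * dirac i j k‖
      ≤ ∑ i : Fin 3, ‖(v i : ℂ) * dirac i j k‖ :=
        norm_sum_le _ _
    _ ≤ ∑ i : Fin 3, ‖v‖ := by
        refine Finset.sum_le_sum fun i _ => ?_
        rw [norm_mul, Complex.norm_real, Real.norm_eq_abs]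
        calc |v i| * ‖dirac i j k‖ ≤ |v i| * 1 :=
              mul_le_mul_of_nonneg_left (dirac_entry_le i j k) (abs_nonneg _)
          _ = ‖v i‖ := by rw [mul_one, Real.norm_eq_abs]
          _ ≤ ‖v‖ := euclid_coord_le v i
    _ = 3 * ‖v‖ := by simp [Finset.sum_const]

lemma key_geom (ω y : R3) (R₀ r : ℝ) (hR : 1 ≤ R₀) (hr : 2 * R₀ ≤ r)
    (hω : ‖ω‖ = 1) (hy : ‖y‖ ≤ R₀) :
    ‖ω - (‖ω - r⁻¹ • y‖ ^ 3)⁻¹ • (ω - r⁻¹ • y)‖ ≤ 20 * (R₀ * r⁻¹) := by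
  have hr0 : 0 < r := by linarith
  set w : R3 := r⁻¹ • y with hw_def
  have hwle : ‖w‖ ≤ R₀ * r⁻¹ := by
    rw [hw_def, norm_smul, norm_inv, Real.norm_eq_abs, abs_of_pos hr0]
    rw [mul_comm]
    exact mul_le_mul_of_nonneg_right hy (by positivity)
  have hRr : R₀ * r⁻¹ ≤ 1/2 := by
    rw [div_eq_mul_inv, ← mul_le_mul_iff_of_pos_right hr0]
    field_simp
    linarith
  have hw2 : ‖w‖ ≤ 1/2 := hwle.trans hRr
  set z : R3 := ω - w with hz_def
  set t : ℝ := ‖z‖ with ht_def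
  have htlow : 1/2 ≤ t := by
    have := norm_sub_norm_le ω w
    rw [← hz_def, hω] at this
    simp only [ht_def]; linarith
  have hthigh : t ≤ 3/2 := by
    have := norm_sub_le ω w
    rw [← hz_def, hω] at this
    simp only [ht_def]; linarith
  have ht0 : 0 < t := by linarith
  have hd : |t - 1| ≤ ‖w‖ := by
    have := abs_norm_sub_norm_le z ω
    have hz : z - ω = -w := by rw [hz_def]; abel
    rw [hz, norm_neg, hω] at this
    exact this
  have hdecomp : ω - (t^3)⁻¹ • z = w + (1 - (t^3)⁻¹) • z := by
    rw [sub_smul, one_smul, hz_def]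
    abel
  calc ‖ω - (t^3)⁻¹ • z‖ = ‖w + (1 - (t^3)⁻¹) • z‖ := by rw [hdecomp]
    _ ≤ ‖w‖ + ‖(1 - (t^3)⁻¹) • z‖ := norm_add_le _ _
    _ = ‖w‖ + |1 - (t^3)⁻¹| * t := by rw [norm_smul (1 - (t^3)⁻¹) z, Real.norm_eq_abs]
    _ ≤ ‖w‖ + 19 * ‖w‖ := by
        have h1 : |1 - (t^3)⁻¹| * t = |t^3 - 1| / t^2 := by
          rw [abs_sub_comm, show t^3 - 1 = (t^3) * (1 - (t^3)⁻¹) by field_simp, abs_mul,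
            abs_of_pos (by positivity : (0:ℝ) < t^3)]
          rw [abs_sub_comm]
          field_simp
        have h2 : |t^3 - 1| ≤ (19/4) * |t - 1| := by
          rw [show t^3 - 1 = (t - 1) * (t^2 + t + 1) by ring, abs_mul,
            abs_of_pos (by nlinarith : (0:ℝ) < t^2 + t + 1), mul_comm]
          apply mul_le_mul_of_nonneg_right _ (abs_nonneg _)
          nlinarith
        have h3 : (1:ℝ)/4 ≤ t^2 := by nlinarith
        have : |t^3 - 1| / t^2 ≤ 19 * ‖w‖ := by
          rw [div_le_iff₀ (by positivity)]
          calc |t^3 - 1| ≤ (19/4) * |t - 1| := h2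
            _ ≤ (19/4) * ‖w‖ := mul_le_mul_of_nonneg_left hd (by norm_num)
            _ ≤ 19 * ‖w‖ * t^2 := by nlinarith [norm_nonneg w]
        rw [h1]
        linarith
    _ = 20 * ‖w‖ := by ring
    _ ≤ 20 * (R₀ * r⁻¹) := by linarith

lemma jb_pos (x : R3) : 0 < jb x := by
  rw [jb]
  positivity

lemma jb_rpow_eq (x : R3) (s : ℝ) : jb x ^ s = (1 + ‖x‖ ^ 2) ^ (s / 2) := by
  rw [jb, Real.sqrt_eq_rpow, ← Real.rpow_mul (by positivity)]
  congr 1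
  ring

lemma jb_integrable {s : ℝ} (hs : 3 < s) :
    Integrable (fun x : R3 => jb x ^ (-s)) volume := by
  have h := integrable_rpow_neg_one_add_norm_sq (E := R3) (μ := volume)
    (r := s) (by simp [finrank_euclideanSpace]; exact_mod_cast hs)
  refine h.congr (Eventually.of_forall fun x => ?_)
  show (1 + ‖x‖ ^ 2) ^ (-s / 2) = jb x ^ (-s)
  rw [jb_rpow_eq, neg_div]

/-- Estimate (2.15) of Saitō–Umeda: the contribution `I_r(ω)` of the region
`{|y| ≤ R₀}` is bounded by `C R₀ r⁻¹`. -/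
theorem integral_estimate_inner_region
    (Q : R3 → Matrix (Fin 4) (Fin 4) ℂ) (hQmeas : ∀ j k, Measurable (fun x => Q x j k))
    (Cq ρ : ℝ) (hCq : 0 < Cq) (hρ : 1 < ρ)
    (hQ : ∀ x, ∀ j k, ‖Q x j k‖ ≤ Cq * jb x ^ (-ρ))
    (f : R3 → C4) (hf_meas : StronglyMeasurable f)
    (Cf : ℝ) (hf_bd : ∀ x, ‖f x‖ ≤ Cf * jb x ^ (-(2:ℝ))) :
    ∃ C > 0, ∀ R₀ : ℝ, 1 ≤ R₀ → ∀ r : ℝ, 2 * R₀ ≤ r → ∀ ω : R3, ‖ω‖ = 1 →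
      ‖∫ y in {y : R3 | ‖y‖ ≤ R₀},
          mulVec4 (alphaDot (ω - (‖ω - r⁻¹ • y‖ ^ 3)⁻¹ • (ω - r⁻¹ • y)))
            (mulVec4 (Q y) (f y))‖ ≤ C * R₀ * r⁻¹ := by
  have hCf0 : 0 ≤ Cf := by
    have h := hf_bd 0
    have h0 : jb (0 : R3) = 1 := by simp [jb]
    rw [h0, Real.one_rpow, mul_one] at h
    exact le_trans (norm_nonneg _) h
  -- the fixed integrable majorant
  have hρ2 : 3 < ρ + 2 := by linarith
  have hint : Integrable (fun y : R3 => jb y ^ (-(ρ + 2))) volume := jb_integrable hρ2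
  set K : ℝ := ∫ y : R3, jb y ^ (-(ρ + 2)) with hK_def
  have hK0 : 0 ≤ K := integral_nonneg fun y => Real.rpow_nonneg (jb_pos y).le _
  -- bound on `Q y f y`
  have hQf : ∀ y : R3, ‖mulVec4 (Q y) (f y)‖ ≤ 8 * Cq * Cf * jb y ^ (-(ρ + 2)) := by
    intro y
    have h1 : ‖mulVec4 (Q y) (f y)‖ ≤ 8 * (Cq * jb y ^ (-ρ)) * ‖f y‖ :=
      mulVec4_norm_le (Q y) (f y) (hQ y)
    have h2 : 8 * (Cq * jb y ^ (-ρ)) * ‖f y‖ ≤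
        8 * (Cq * jb y ^ (-ρ)) * (Cf * jb y ^ (-(2:ℝ))) := by
      apply mul_le_mul_of_nonneg_left (hf_bd y)
      have := Real.rpow_nonneg (jb_pos y).le (-ρ)
      positivity
    have h3 : 8 * (Cq * jb y ^ (-ρ)) * (Cf * jb y ^ (-(2:ℝ)))
        = 8 * Cq * Cf * jb y ^ (-(ρ + 2)) := by
      rw [show -(ρ + 2) = -ρ + -(2:ℝ) by ring, Real.rpow_add (jb_pos y)]
      ring
    linarith
  refine ⟨3840 * Cq * (Cf + 1) * (K + 1), by positivity, ?_⟩
  intro R₀ hR r hr ω hω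
  have hr0 : 0 < r := by linarith
  have hS : MeasurableSet {y : R3 | ‖y‖ ≤ R₀} :=
    (isClosed_le continuous_norm continuous_const).measurableSet
  set c : ℝ := 3840 * Cq * Cf * (R₀ * r⁻¹) with hc_def
  have hc0 : 0 ≤ c := by positivity
  have hg_int : Integrable (fun y : R3 => c * jb y ^ (-(ρ + 2)))
      (volume.restrict {y : R3 | ‖y‖ ≤ R₀}) := (hint.const_mul c).restrict
  have hbd : ∀ᵐ y ∂(volume.restrict {y : R3 | ‖y‖ ≤ R₀}),
      ‖mulVec4 (alphaDot (ω - (‖ω - r⁻¹ • y‖ ^ 3)⁻¹ • (ω - r⁻¹ • y)))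
        (mulVec4 (Q y) (f y))‖ ≤ c * jb y ^ (-(ρ + 2)) := by
    rw [ae_restrict_iff' hS]
    refine Eventually.of_forall fun y hy => ?_
    have hy' : ‖y‖ ≤ R₀ := hy
    have hA : ‖ω - (‖ω - r⁻¹ • y‖ ^ 3)⁻¹ • (ω - r⁻¹ • y)‖ ≤ 20 * (R₀ * r⁻¹) :=
      key_geom ω y R₀ r hR hr hω hy'
    have hmain : ‖mulVec4 (alphaDot (ω - (‖ω - r⁻¹ • y‖ ^ 3)⁻¹ • (ω - r⁻¹ • y)))
        (mulVec4 (Q y) (f y))‖ ≤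
        8 * (3 * ‖ω - (‖ω - r⁻¹ • y‖ ^ 3)⁻¹ • (ω - r⁻¹ • y)‖) * ‖mulVec4 (Q y) (f y)‖ :=
      mulVec4_norm_le _ _ (alphaDot_entry_le _)
    have hB := hQf y
    have hAB : 8 * (3 * ‖ω - (‖ω - r⁻¹ • y‖ ^ 3)⁻¹ • (ω - r⁻¹ • y)‖) * ‖mulVec4 (Q y) (f y)‖
        ≤ 24 * (20 * (R₀ * r⁻¹)) * (8 * Cq * Cf * jb y ^ (-(ρ + 2))) := by
      have h1 : (0:ℝ) ≤ ‖mulVec4 (Q y) (f y)‖ := norm_nonneg _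
      have h2 : (0:ℝ) ≤ ‖ω - (‖ω - r⁻¹ • y‖ ^ 3)⁻¹ • (ω - r⁻¹ • y)‖ := norm_nonneg _
      have h3 : (0:ℝ) ≤ 20 * (R₀ * r⁻¹) := by positivity
      nlinarith
    have heq : 24 * (20 * (R₀ * r⁻¹)) * (8 * Cq * Cf * jb y ^ (-(ρ + 2)))
        = c * jb y ^ (-(ρ + 2)) := by rw [hc_def]; ring
    linarith
  calc ‖∫ y in {y : R3 | ‖y‖ ≤ R₀},
          mulVec4 (alphaDot (ω - (‖ω - r⁻¹ • y‖ ^ 3)⁻¹ • (ω - r⁻¹ • y)))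
            (mulVec4 (Q y) (f y))‖
      ≤ ∫ y in {y : R3 | ‖y‖ ≤ R₀}, c * jb y ^ (-(ρ + 2)) :=
        norm_integral_le_of_norm_le hg_int hbd
    _ = c * ∫ y in {y : R3 | ‖y‖ ≤ R₀}, jb y ^ (-(ρ + 2)) := integral_const_mul c _
    _ ≤ c * K := by
        apply mul_le_mul_of_nonneg_left _ hc0
        exact setIntegral_le_integral hint
          (Eventually.of_forall fun y => Real.rpow_nonneg (jb_pos y).le _)
    _ ≤ 3840 * Cq * (Cf + 1) * (K + 1) * R₀ * r⁻¹ := by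
        rw [hc_def]
        have h1 : 0 < R₀ * r⁻¹ := by positivity
        nlinarith [mul_pos hCq h1]
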